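/- For every subset A of the vertices of the (k,t)-tower T = T_{k,t} with |A| ≥ 2, the potential ρ_{k,T}(A) = (k+1)(k-2)|A| - 2(k-1)|E(T[A])| satisfies ρ_{k,T}(A) ≥ 2(k+1)(k-2) - 2(k-1). Moreover, if A contains the base V₀ = {v_{0,0}, v_{0,1}}, then ρ_{k,T}(A) ≥ 2(k+1)(k-2). -/

import Mathlib

/-- Valid vertices of the `(k,t)`-tower: the base `V₀ = {(0,0),(0,1)}` and
levels `V_i = {(i,j) : j ≤ k-2}` for `1 ≤ i ≤ t`. -/
def towerValid (k t : ℕ) (p : ℕ × ℕ) : Prop :=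
  (p.1 = 0 ∧ p.2 < 2) ∨ (1 ≤ p.1 ∧ p.1 ≤ t ∧ p.2 ≤ k - 2)

/-- Vertices of the `(k,t)`-tower. -/
def TowerVertex (k t : ℕ) : Type := {p : ℕ × ℕ // towerValid k t p}

/-- One-directional adjacency of the tower: within a level `i ≥ 1` it is
`K_{k-1}` minus the edge `v_{i,0}v_{i,1}`; `v_{i-1,0}` is joined to `v_{i,j}`
for `j ≤ ⌊(k-2)/2⌋` and `v_{i-1,1}` to `v_{i,j}` for `⌈(k-1)/2⌉ = ⌊k/2⌋ ≤ j ≤ k-2`. -/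
def towerAdjAux (k : ℕ) (p q : ℕ × ℕ) : Prop :=
  (p.1 = q.1 ∧ 1 ≤ p.1 ∧ p.2 ≠ q.2 ∧ ¬(p.2 ≤ 1 ∧ q.2 ≤ 1)) ∨
  (q.1 = p.1 + 1 ∧ ((p.2 = 0 ∧ q.2 ≤ (k - 2) / 2) ∨ (p.2 = 1 ∧ k / 2 ≤ q.2)))

/-- The `(k,t)`-tower `T_{k,t}` as a simple graph. -/
def towerGraph (k t : ℕ) : SimpleGraph (TowerVertex k t) where
  Adj x y := towerAdjAux k x.1 y.1 ∨ towerAdjAux k y.1 x.1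
  symm := ⟨fun x y h => Or.symm h⟩
  loopless := by
    constructor
    rintro ⟨⟨i, j⟩, hv⟩ h
    simp [towerAdjAux] at h

/-- The number of edges of `G` with both endpoints in `A`. -/
noncomputable def edgeCountOn {V : Type*} (G : SimpleGraph V) (A : Set V) : ℕ :=
  {e ∈ G.edgeSet | ∀ v ∈ e, v ∈ A}.ncard

/-- The potential `ρ_{k,G}(A) = (k+1)(k-2)|A| - 2(k-1)|E(G[A])|`. -/
noncomputable def potential {V : Type*} (k : ℕ) (G : SimpleGraph V) (A : Finset V) : ℤ :=
  ((k : ℤ) + 1) * ((k : ℤ) - 2) * A.card - 2 * ((k : ℤ) - 1) * edgeCountOn G ↑A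

-- auxiliary development
namespace TowerAux

open Finset

instance {k t : ℕ} : DecidableEq (TowerVertex k t) :=
  inferInstanceAs (DecidableEq {p : ℕ × ℕ // towerValid k t p})

instance {k : ℕ} (p q : ℕ × ℕ) : Decidable (towerAdjAux k p q) := by
  unfold towerAdjAux; infer_instance

instance {k t : ℕ} : DecidableRel (towerGraph k t).Adj := fun x y =>
  inferInstanceAs (Decidable (towerAdjAux k x.1 y.1 ∨ towerAdjAux k y.1 x.1))

variable {k t : ℕ}

lemma adj_iff {x y : TowerVertex k t} :
    (towerGraph k t).Adj x y ↔ towerAdjAux k x.1 y.1 ∨ towerAdjAux k y.1 x.1 := Iff.rfl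

lemma valid_snd_lt (hk : 4 ≤ k) (v : TowerVertex k t) : v.1.2 < k := by
  rcases v.2 with ⟨_, h⟩ | ⟨_, _, h⟩ <;> omega

lemma valid_fst_le (v : TowerVertex k t) : v.1.1 ≤ t := by
  rcases v.2 with ⟨h, _⟩ | ⟨_, h, _⟩ <;> omega

def iota (k : ℕ) (v : TowerVertex k t) : ℕ := v.1.1 * k + v.1.2

lemma iota_lt_of_lvl_lt (hk : 4 ≤ k) {u v : TowerVertex k t} (h : u.1.1 < v.1.1) :
    iota k u < iota k v := by
  have h2 := valid_snd_lt hk u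
  calc u.1.1 * k + u.1.2 < u.1.1 * k + k := by omega
    _ = (u.1.1 + 1) * k := by ring
    _ ≤ v.1.1 * k := Nat.mul_le_mul_right k h
    _ ≤ v.1.1 * k + v.1.2 := Nat.le_add_right _ _

lemma iota_inj (hk : 4 ≤ k) {u v : TowerVertex k t} (h : iota k u = iota k v) : u = v := by
  have h1 : u.1.1 = v.1.1 := by
    by_contra hne
    rcases Nat.lt_or_ge u.1.1 v.1.1 with hl | hl
    · exact absurd h (Nat.ne_of_lt (iota_lt_of_lvl_lt hk hl))
    · have : v.1.1 < u.1.1 := by omega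
      exact absurd h.symm (Nat.ne_of_lt (iota_lt_of_lvl_lt hk this))
  have h2 : u.1.2 = v.1.2 := by
    have := h
    unfold iota at this
    rw [h1] at this
    exact Nat.add_left_cancel this
  exact Subtype.ext (Prod.ext h1 h2)

def Epairs (k t : ℕ) (A : Finset (TowerVertex k t)) :
    Finset (TowerVertex k t × TowerVertex k t) :=
  (A ×ˢ A).filter fun p => (towerGraph k t).Adj p.1 p.2 ∧ iota k p.1 < iota k p.2

lemma mem_Epairs {A : Finset (TowerVertex k t)} {p : TowerVertex k t × TowerVertex k t} :
    p ∈ Epairs k t A ↔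
      p.1 ∈ A ∧ p.2 ∈ A ∧ (towerGraph k t).Adj p.1 p.2 ∧ iota k p.1 < iota k p.2 := by
  simp [Epairs, Finset.mem_filter, Finset.mem_product, and_assoc]

lemma edgeCount_le (hk : 4 ≤ k) (A : Finset (TowerVertex k t)) :
    edgeCountOn (towerGraph k t) ↑A ≤ (Epairs k t A).card := by
  have hsub : {e ∈ (towerGraph k t).edgeSet | ∀ v ∈ e, v ∈ (↑A : Set (TowerVertex k t))} ⊆
      (fun p : TowerVertex k t × TowerVertex k t => s(p.1, p.2)) '' ↑(Epairs k t A) := by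
    intro e he
    obtain ⟨he1, he2⟩ := he
    induction e using Sym2.ind with
    | _ u v =>
      rw [SimpleGraph.mem_edgeSet] at he1
      have hu : u ∈ A := he2 u (Sym2.mem_mk_left u v)
      have hvA : v ∈ A := he2 v (Sym2.mem_mk_right u v)
      have hne : iota k u ≠ iota k v := fun h => (towerGraph k t).loopless.irrefl u (iota_inj hk h ▸ he1)
      rcases Nat.lt_or_ge (iota k u) (iota k v) with h | h
      · exact ⟨(u, v), by simp [mem_Epairs, hu, hvA, he1, h], rfl⟩
      · have h' : iota k v < iota k u := by omega
        exact ⟨(v, u), by simp [mem_Epairs, hu, hvA, he1.symm, h'],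
          by simp [Sym2.eq_swap]⟩
  calc edgeCountOn (towerGraph k t) ↑A
      ≤ ((fun p : TowerVertex k t × TowerVertex k t => s(p.1, p.2)) ''
          ↑(Epairs k t A)).ncard :=
        Set.ncard_le_ncard hsub ((Epairs k t A).finite_toSet.image _)
    _ ≤ (Epairs k t A).card := by
        rw [← Set.ncard_coe_finset (Epairs k t A)]
        exact Set.ncard_image_le (Epairs k t A).finite_toSet



variable {A : Finset (TowerVertex k t)}

def levA (k t : ℕ) (A : Finset (TowerVertex k t)) (i : ℕ) : Finset (TowerVertex k t) :=
  A.filter fun v => v.1.1 = i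

def spA (k t : ℕ) (A : Finset (TowerVertex k t)) (i : ℕ) : Finset (TowerVertex k t) :=
  A.filter fun v => v.1.1 = i ∧ v.1.2 ≤ 1

def wE (k t : ℕ) (A : Finset (TowerVertex k t)) (i : ℕ) : ℕ :=
  ((Epairs k t A).filter fun p => p.2.1.1 = i ∧ p.1.1.1 = i).card

def xE (k t : ℕ) (A : Finset (TowerVertex k t)) (i : ℕ) : ℕ :=
  ((Epairs k t A).filter fun p => p.2.1.1 = i ∧ ¬ p.1.1.1 = i).card

lemma within_nf (hk : 4 ≤ k) {p : TowerVertex k t × TowerVertex k t}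
    (hp : p ∈ Epairs k t A) (h : p.1.1.1 = p.2.1.1) :
    1 ≤ p.1.1.1 ∧ p.1.1.2 < p.2.1.2 ∧ ¬(p.1.1.2 ≤ 1 ∧ p.2.1.2 ≤ 1) := by
  obtain ⟨-, -, hadj, hord⟩ := mem_Epairs.mp hp
  have hj : p.1.1.2 < p.2.1.2 := by
    unfold iota at hord; rw [h] at hord
    exact Nat.lt_of_add_lt_add_left hord
  rcases hadj with h1 | h1 <;> rcases h1 with ⟨heq, hl, hne, hns⟩ | ⟨hc, _⟩
  · exact ⟨hl, hj, hns⟩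
  · omega
  · exact ⟨by omega, hj, fun hx => hns ⟨hx.2, hx.1⟩⟩
  · omega

lemma cross_nf (hk : 4 ≤ k) {p : TowerVertex k t × TowerVertex k t}
    (hp : p ∈ Epairs k t A) (h : ¬ p.1.1.1 = p.2.1.1) :
    p.2.1.1 = p.1.1.1 + 1 ∧
      ((p.1.1.2 = 0 ∧ p.2.1.2 ≤ (k - 2) / 2) ∨ (p.1.1.2 = 1 ∧ k / 2 ≤ p.2.1.2)) := by
  obtain ⟨-, -, hadj, hord⟩ := mem_Epairs.mp hp
  rcases hadj with h1 | h1 <;> rcases h1 with ⟨heq, _⟩ | ⟨hc, hcl⟩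
  · exact absurd heq h
  · exact ⟨hc, hcl⟩
  · exact absurd heq.symm h
  · exfalso
    have : iota k p.2 < iota k p.1 := iota_lt_of_lvl_lt hk (by omega)
    omega

lemma wE_zero (hk : 4 ≤ k) : wE k t A 0 = 0 := by
  rw [wE, Finset.card_eq_zero, Finset.filter_eq_empty_iff]
  rintro p hp ⟨h2, h1⟩
  have := (within_nf hk hp (by omega)).1
  omega

lemma xE_zero' (hk : 4 ≤ k) : xE k t A 0 = 0 := by
  rw [xE, Finset.card_eq_zero, Finset.filter_eq_empty_iff]
  rintro p hp ⟨h2, h1⟩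
  have := (cross_nf hk hp (by omega)).1
  omega

lemma Epairs_card_decomp (hk : 4 ≤ k) :
    (Epairs k t A).card = ∑ i ∈ Finset.Ico 1 (t + 1), (wE k t A i + xE k t A i) := by
  have h1 : (Epairs k t A).card =
      ∑ i ∈ Finset.range (t + 1), ((Epairs k t A).filter fun p => p.2.1.1 = i).card :=
    Finset.card_eq_sum_card_fiberwise fun p _ =>
      Finset.mem_range.mpr (Nat.lt_succ_of_le (valid_fst_le p.2))
  have h2 : ∀ i, ((Epairs k t A).filter fun p => p.2.1.1 = i).card =
      wE k t A i + xE k t A i := by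
    intro i
    have h3 := Finset.card_filter_add_card_filter_not
      (s := (Epairs k t A).filter fun p => p.2.1.1 = i) (p := fun p => p.1.1.1 = i)

    rw [Finset.filter_filter, Finset.filter_filter] at h3
    rw [wE, xE]
    omega
  rw [h1]
  simp only [h2]
  rw [Finset.range_eq_Ico, Finset.sum_eq_sum_Ico_succ_bot (by omega :  0 < t + 1)]
  rw [wE_zero hk, xE_zero' hk]
  norm_num

-- basic cardinality bounds
lemma levA_card_le (hk : 4 ≤ k) (i : ℕ) (hi : 1 ≤ i) : (levA k t A i).card ≤ k - 1 := by
  have : (levA k t A i).card ≤ (Finset.range (k - 1)).card := by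
    apply Finset.card_le_card_of_injOn (fun v => v.1.2)
    · intro v hv
      obtain ⟨hvA, hlvl⟩ := Finset.mem_filter.mp hv
      rcases v.2 with ⟨h0, _⟩ | ⟨_, _, hj⟩
      · omega
      · exact Finset.mem_range.mpr (by beta_reduce; omega)
    · intro u hu v hv h
      obtain ⟨-, hu2⟩ := Finset.mem_filter.mp hu
      obtain ⟨-, hv2⟩ := Finset.mem_filter.mp hv
      exact Subtype.ext (Prod.ext (by omega) h)
  simpa using this

lemma levA0_card_le : (levA k t A 0).card ≤ 2 := by
  have : (levA k t A 0).card ≤ (Finset.range 2).card := by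
    apply Finset.card_le_card_of_injOn (fun v => v.1.2)
    · intro v hv
      obtain ⟨hvA, hlvl⟩ := Finset.mem_filter.mp hv
      rcases v.2 with ⟨h0, h1⟩ | ⟨h0, _⟩
      · exact Finset.mem_range.mpr (by beta_reduce; omega)
      · omega
    · intro u hu v hv h
      obtain ⟨-, hu2⟩ := Finset.mem_filter.mp hu
      obtain ⟨-, hv2⟩ := Finset.mem_filter.mp hv
      exact Subtype.ext (Prod.ext (by omega) h)
  simpa using this

lemma spA_subset (i : ℕ) : spA k t A i ⊆ levA k t A i := by
  intro v hv
  obtain ⟨hvA, h1, h2⟩ := Finset.mem_filter.mp hv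
  exact Finset.mem_filter.mpr ⟨hvA, h1⟩

lemma spA_card_le (i : ℕ) : (spA k t A i).card ≤ 2 := by
  have : (spA k t A i).card ≤ (Finset.range 2).card := by
    apply Finset.card_le_card_of_injOn (fun v => v.1.2)
    · intro v hv
      obtain ⟨hvA, h1, h2⟩ := Finset.mem_filter.mp hv
      exact Finset.mem_range.mpr (by beta_reduce; omega)
    · intro u hu v hv h
      obtain ⟨-, hu1, -⟩ := Finset.mem_filter.mp hu
      obtain ⟨-, hv1, -⟩ := Finset.mem_filter.mp hv
      exact Subtype.ext (Prod.ext (by omega) h)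
  simpa using this

lemma nonsp_bound (hk : 4 ≤ k) (i : ℕ) (hi : 1 ≤ i) :
    (levA k t A i).card ≤ (spA k t A i).card + (k - 3) := by
  have hsplit := Finset.card_filter_add_card_filter_not
    (s := levA k t A i) (p := fun v => v.1.2 ≤ 1)
  have h1 : (levA k t A i).filter (fun v => v.1.2 ≤ 1) = spA k t A i := by
    rw [levA, spA, Finset.filter_filter]
  have h2 : ((levA k t A i).filter fun v => ¬ v.1.2 ≤ 1).card ≤ k - 3 := by
    have : ((levA k t A i).filter fun v => ¬ v.1.2 ≤ 1).card ≤
        (Finset.range (k - 3)).card := by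
      apply Finset.card_le_card_of_injOn (fun v => v.1.2 - 2)
      · intro v hv
        obtain ⟨hv1, hv2⟩ := Finset.mem_filter.mp hv
        obtain ⟨hvA, hlvl⟩ := Finset.mem_filter.mp hv1
        rcases v.2 with ⟨h0, _⟩ | ⟨_, _, hj⟩
        · omega
        · exact Finset.mem_range.mpr (by beta_reduce; omega)
      · intro u hu v hv h
        obtain ⟨hu1, hu2⟩ := Finset.mem_filter.mp hu
        obtain ⟨-, hu3⟩ := Finset.mem_filter.mp hu1
        obtain ⟨hv1, hv2⟩ := Finset.mem_filter.mp hv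
        obtain ⟨-, hv3⟩ := Finset.mem_filter.mp hv1
        have h' : u.1.2 - 2 = v.1.2 - 2 := h
        exact Subtype.ext (Prod.ext (by omega) (by omega))
    simpa using this
  rw [h1] at hsplit
  omega

lemma spA0_eq : spA k t A 0 = levA k t A 0 := by
  apply Finset.Subset.antisymm (spA_subset 0)
  intro v hv
  obtain ⟨hvA, hlvl⟩ := Finset.mem_filter.mp hv
  refine Finset.mem_filter.mpr ⟨hvA, hlvl, ?_⟩
  rcases v.2 with ⟨h0, h1⟩ | ⟨h0, _⟩ <;> omega

lemma spA_two (i : ℕ) (h : 2 ≤ (spA k t A i).card) :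
    ∃ u0 ∈ A, ∃ u1 ∈ A, u0.1 = (i, 0) ∧ u1.1 = (i, 1) := by
  set f : TowerVertex k t → ℕ := fun v => v.1.2 with hf
  have hinj : Set.InjOn f (spA k t A i) := by
    intro u hu v hv hfe
    obtain ⟨-, hu1, -⟩ := Finset.mem_filter.mp hu
    obtain ⟨-, hv1, -⟩ := Finset.mem_filter.mp hv
    exact Subtype.ext (Prod.ext (by omega) hfe)
  have himg : (spA k t A i).image f ⊆ {0, 1} := by
    intro j hj
    obtain ⟨v, hv, hfv⟩ := Finset.mem_image.mp hj
    simp only [Finset.mem_insert, Finset.mem_singleton]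
    obtain ⟨-, -, h2⟩ := Finset.mem_filter.mp hv
    subst hfv
    show f v = 0 ∨ f v = 1
    show v.1.2 = 0 ∨ v.1.2 = 1
    omega
  have hcard : ((spA k t A i).image f).card = (spA k t A i).card :=
    Finset.card_image_of_injOn hinj
  have heq : (spA k t A i).image f = {0, 1} := by
    apply Finset.eq_of_subset_of_card_le himg
    rw [hcard]
    simpa using h
  have h0 : (0 : ℕ) ∈ (spA k t A i).image f := by rw [heq]; simp
  have h1 : (1 : ℕ) ∈ (spA k t A i).image f := by rw [heq]; simp
  obtain ⟨u0, hu0, hu0f⟩ := Finset.mem_image.mp h0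
  obtain ⟨u1, hu1, hu1f⟩ := Finset.mem_image.mp h1
  obtain ⟨hu0A, hu0l, -⟩ := Finset.mem_filter.mp hu0
  obtain ⟨hu1A, hu1l, -⟩ := Finset.mem_filter.mp hu1
  exact ⟨u0, hu0A, u1, hu1A, Prod.ext hu0l hu0f, Prod.ext hu1l hu1f⟩

lemma spA_one (i : ℕ) (h : (spA k t A i).card = 1) :
    (∀ u ∈ A, u.1 ≠ (i, 1)) ∨ (∀ u ∈ A, u.1 ≠ (i, 0)) := by
  obtain ⟨u, hu⟩ := Finset.card_eq_one.mp h
  have humem : u ∈ spA k t A i := hu ▸ Finset.mem_singleton_self u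
  obtain ⟨huA, hul, huj⟩ := Finset.mem_filter.mp humem
  rcases Nat.lt_or_ge u.1.2 1 with hj | hj
  · left
    intro v hv hve
    have hmem : v ∈ spA k t A i := Finset.mem_filter.mpr ⟨hv, by simp [hve], by simp [hve]⟩
    rw [hu, Finset.mem_singleton] at hmem
    rw [hmem] at hve
    have : u.1.2 = 1 := by rw [hve]
    omega
  · right
    intro v hv hve
    have hmem : v ∈ spA k t A i := Finset.mem_filter.mpr ⟨hv, by simp [hve], by simp [hve]⟩
    rw [hu, Finset.mem_singleton] at hmem
    rw [hmem] at hve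
    have : u.1.2 = 0 := by rw [hve]
    omega

lemma no_adj_specials {u0 u1 : TowerVertex k t} {i : ℕ}
    (h0 : u0.1 = (i, 0)) (h1 : u1.1 = (i, 1)) : ¬ (towerGraph k t).Adj u0 u1 := by
  have a0 : u0.1.1 = i := by rw [h0]
  have b0 : u0.1.2 = 0 := by rw [h0]
  have a1 : u1.1.1 = i := by rw [h1]
  have b1 : u1.1.2 = 1 := by rw [h1]
  intro hadj
  rcases hadj with h | h <;> rcases h with ⟨heq, hl, hne, hns⟩ | ⟨hc, hcl⟩
  · exact hns ⟨by omega, by omega⟩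
  · omega
  · exact hns ⟨by omega, by omega⟩
  · omega

lemma wE_union_bound (hk : 4 ≤ k) (i : ℕ) :
    2 * wE k t A i ≤
      (((levA k t A i) ×ˢ (levA k t A i)).filter fun p =>
        (towerGraph k t).Adj p.1 p.2).card := by
  set W := (Epairs k t A).filter (fun p => p.2.1.1 = i ∧ p.1.1.1 = i) with hW
  set P := ((levA k t A i) ×ˢ (levA k t A i)).filter
    (fun p => (towerGraph k t).Adj p.1 p.2) with hP
  have hWP : W ⊆ P := by
    intro p hp
    obtain ⟨hpE, h2, h1⟩ := Finset.mem_filter.mp hp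
    obtain ⟨hp1, hp2, hadj, -⟩ := mem_Epairs.mp hpE
    exact Finset.mem_filter.mpr ⟨Finset.mem_product.mpr
      ⟨Finset.mem_filter.mpr ⟨hp1, h1⟩, Finset.mem_filter.mpr ⟨hp2, h2⟩⟩, hadj⟩
  have hW'P : W.image Prod.swap ⊆ P := by
    intro q hq
    obtain ⟨p, hp, hpq⟩ := Finset.mem_image.mp hq
    obtain ⟨hpE, h2, h1⟩ := Finset.mem_filter.mp hp
    obtain ⟨hp1, hp2, hadj, -⟩ := mem_Epairs.mp hpE
    subst hpq
    exact Finset.mem_filter.mpr ⟨Finset.mem_product.mpr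
      ⟨Finset.mem_filter.mpr ⟨hp2, h2⟩, Finset.mem_filter.mpr ⟨hp1, h1⟩⟩, hadj.symm⟩
  have hdisj : Disjoint W (W.image Prod.swap) := by
    rw [Finset.disjoint_left]
    intro q hq hq'
    obtain ⟨-, -, -, hord⟩ := mem_Epairs.mp (Finset.mem_filter.mp hq).1
    obtain ⟨p, hp, hpq⟩ := Finset.mem_image.mp hq'
    obtain ⟨-, -, -, hord'⟩ := mem_Epairs.mp (Finset.mem_filter.mp hp).1
    subst hpq
    simp only [Prod.fst_swap, Prod.snd_swap] at hord
    omega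
  have hcard : (W ∪ W.image Prod.swap).card = 2 * W.card := by
    rw [Finset.card_union_of_disjoint hdisj,
      Finset.card_image_of_injective _ Prod.swap_injective]
    omega
  calc 2 * wE k t A i = (W ∪ W.image Prod.swap).card := hcard.symm
    _ ≤ P.card := Finset.card_le_card (Finset.union_subset hWP hW'P)

lemma wE_bound (hk : 4 ≤ k) (i : ℕ) :
    2 * wE k t A i + (levA k t A i).card ≤
      (levA k t A i).card * (levA k t A i).card := by
  have h1 := wE_union_bound (A := A) hk i
  have h2 : (((levA k t A i) ×ˢ (levA k t A i)).filter fun p =>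
      (towerGraph k t).Adj p.1 p.2) ⊆ (levA k t A i).offDiag := by
    intro p hp
    obtain ⟨hmem, hadj⟩ := Finset.mem_filter.mp hp
    obtain ⟨hp1, hp2⟩ := Finset.mem_product.mp hmem
    exact Finset.mem_offDiag.mpr ⟨hp1, hp2, hadj.ne⟩
  have h3 := Finset.card_le_card h2
  rw [Finset.offDiag_card] at h3
  have h4 : (levA k t A i).card ≤ (levA k t A i).card * (levA k t A i).card := by
    nlinarith [Nat.zero_le ((levA k t A i).card)]
  set m := (levA k t A i).card * (levA k t A i).card with hm
  omega

lemma wE_bound2 (hk : 4 ≤ k) (i : ℕ) (h : 2 ≤ (spA k t A i).card) :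
    2 * wE k t A i + (levA k t A i).card + 2 ≤
      (levA k t A i).card * (levA k t A i).card := by
  obtain ⟨u0, hu0A, u1, hu1A, h0, h1⟩ := spA_two i h
  have hne01 : u0 ≠ u1 := by
    intro he
    rw [he, h1] at h0
    simp at h0
  have h1' := wE_union_bound (A := A) hk i
  set D := (levA k t A i).offDiag with hD
  have hm1 : (u0, u1) ∈ D := Finset.mem_offDiag.mpr
    ⟨Finset.mem_filter.mpr ⟨hu0A, by rw [h0]⟩,
     Finset.mem_filter.mpr ⟨hu1A, by rw [h1]⟩, hne01⟩
  have hm2 : (u1, u0) ∈ D := Finset.mem_offDiag.mpr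
    ⟨Finset.mem_filter.mpr ⟨hu1A, by rw [h1]⟩,
     Finset.mem_filter.mpr ⟨hu0A, by rw [h0]⟩, hne01.symm⟩
  have hpairne : ((u1, u0) : TowerVertex k t × TowerVertex k t) ≠ (u0, u1) := by
    intro he
    exact hne01 (congrArg Prod.snd he)
  have h2 : (((levA k t A i) ×ˢ (levA k t A i)).filter fun p =>
      (towerGraph k t).Adj p.1 p.2) ⊆ (D.erase (u0, u1)).erase (u1, u0) := by
    intro p hp
    obtain ⟨hmem, hadj⟩ := Finset.mem_filter.mp hp
    obtain ⟨hp1, hp2⟩ := Finset.mem_product.mp hmem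
    refine Finset.mem_erase.mpr ⟨?_, Finset.mem_erase.mpr ⟨?_, ?_⟩⟩
    · intro he
      rw [he] at hadj
      exact no_adj_specials h0 h1 hadj.symm
    · intro he
      rw [he] at hadj
      exact no_adj_specials h0 h1 hadj
    · exact Finset.mem_offDiag.mpr ⟨hp1, hp2, hadj.ne⟩
  have h3 := Finset.card_le_card h2
  have hc1 : ((D.erase (u0, u1)).erase (u1, u0)).card = D.card - 2 := by
    rw [Finset.card_erase_of_mem (Finset.mem_erase.mpr ⟨hpairne, hm2⟩),
      Finset.card_erase_of_mem hm1]
    omega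
  have hD2 : 2 ≤ D.card := Finset.one_lt_card.mpr ⟨(u0, u1), hm1, (u1, u0), hm2, hpairne.symm⟩
  have hDc : D.card = (levA k t A i).card * (levA k t A i).card - (levA k t A i).card :=
    Finset.offDiag_card _
  have h4 : (levA k t A i).card ≤ (levA k t A i).card * (levA k t A i).card := by
    nlinarith [Nat.zero_le ((levA k t A i).card)]
  set m := (levA k t A i).card * (levA k t A i).card with hm
  omega

lemma xE_snd_injOn (hk : 4 ≤ k) (i : ℕ) :
    Set.InjOn (fun p : TowerVertex k t × TowerVertex k t => p.2)
      ↑((Epairs k t A).filter fun p => p.2.1.1 = i ∧ ¬ p.1.1.1 = i) := by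
  intro p hp q hq he
  obtain ⟨hpE, hp2, hp1⟩ := Finset.mem_filter.mp (Finset.mem_coe.mp hp)
  obtain ⟨hqE, hq2, hq1⟩ := Finset.mem_filter.mp (Finset.mem_coe.mp hq)
  obtain ⟨hcp, hclp⟩ := cross_nf hk hpE (by simp only [hp2]; exact hp1)
  obtain ⟨hcq, hclq⟩ := cross_nf hk hqE (by simp only [hq2]; exact hq1)
  have he2 : p.2 = q.2 := he
  have hfst : p.1 = q.1 := by
    rw [he2] at hcp hclp
    have hll : p.1.1.1 = q.1.1.1 := by omega
    have hjj : p.1.1.2 = q.1.1.2 := by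
      rcases hclp with ⟨h0, hch⟩ | ⟨h0, hch⟩ <;>
        rcases hclq with ⟨h0', hch'⟩ | ⟨h0', hch'⟩ <;> omega
    exact Subtype.ext (Prod.ext hll hjj)
  exact Prod.ext hfst he2

lemma xE_le (hk : 4 ≤ k) (i : ℕ) : xE k t A i ≤ (levA k t A i).card := by
  apply Finset.card_le_card_of_injOn (fun p => p.2)
  · intro p hp
    obtain ⟨hpE, hp2, -⟩ := Finset.mem_filter.mp hp
    obtain ⟨-, hp2A, -, -⟩ := mem_Epairs.mp hpE
    exact Finset.mem_filter.mpr ⟨hp2A, hp2⟩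
  · exact xE_snd_injOn hk i

lemma xE_eq_zero (hk : 4 ≤ k) (i : ℕ) (hi : 1 ≤ i) (h : (spA k t A (i - 1)).card = 0) :
    xE k t A i = 0 := by
  rw [xE, Finset.card_eq_zero, Finset.filter_eq_empty_iff]
  rintro p hpE ⟨hp2, hp1⟩
  obtain ⟨hc, hcl⟩ := cross_nf hk hpE (by simp only [hp2]; exact hp1)
  have hp1A : p.1 ∈ A := (mem_Epairs.mp hpE).1
  have hmem : p.1 ∈ spA k t A (i - 1) := Finset.mem_filter.mpr
    ⟨hp1A, by omega, by rcases hcl with ⟨h0, -⟩ | ⟨h0, -⟩ <;> omega⟩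
  rw [Finset.card_eq_zero] at h
  rw [h] at hmem
  exact absurd hmem (Finset.notMem_empty _)

lemma xE_bound0 (hk : 4 ≤ k) (i : ℕ) (hi : 1 ≤ i) (h : ∀ u ∈ A, u.1 ≠ (i - 1, 1)) :
    2 * xE k t A i + 4 ≤ 2 * (spA k t A i).card + k := by
  set C := (levA k t A i).filter (fun v => v.1.2 ≤ (k - 2) / 2) with hC
  have h1 : xE k t A i ≤ C.card := by
    apply Finset.card_le_card_of_injOn (fun p => p.2)
    · intro p hp
      obtain ⟨hpE, hp2, hp1⟩ := Finset.mem_filter.mp hp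
      obtain ⟨hpA1, hpA2, -, -⟩ := mem_Epairs.mp hpE
      obtain ⟨hc, hcl⟩ := cross_nf hk hpE (by simp only [hp2]; exact hp1)
      rcases hcl with ⟨h0, hch⟩ | ⟨h0, hch⟩
      · exact Finset.mem_filter.mpr ⟨Finset.mem_filter.mpr ⟨hpA2, hp2⟩, hch⟩
      · exact absurd (Prod.ext (by omega) h0 : p.1.1 = (i - 1, 1)) (h p.1 hpA1)
    · exact xE_snd_injOn hk i
  have h2 : (C.filter fun v => v.1.2 ≤ 1) ⊆ spA k t A i := by
    intro v hv
    obtain ⟨hv1, hv2⟩ := Finset.mem_filter.mp hv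
    obtain ⟨hvlev, -⟩ := Finset.mem_filter.mp hv1
    obtain ⟨hvA, hlvl⟩ := Finset.mem_filter.mp hvlev
    exact Finset.mem_filter.mpr ⟨hvA, hlvl, hv2⟩
  have h3 : (C.filter fun v => ¬ v.1.2 ≤ 1).card ≤ (k - 2) / 2 - 1 := by
    have hle : (C.filter fun v => ¬ v.1.2 ≤ 1).card ≤
        (Finset.range ((k - 2) / 2 - 1)).card := by
      apply Finset.card_le_card_of_injOn (fun v => v.1.2 - 2)
      · intro v hv
        obtain ⟨hv1, hv2⟩ := Finset.mem_filter.mp hv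
        obtain ⟨-, hvj⟩ := Finset.mem_filter.mp hv1
        exact Finset.mem_range.mpr (by beta_reduce; omega)
      · intro u hu v hv hfe
        obtain ⟨hu1, hu2⟩ := Finset.mem_filter.mp hu
        obtain ⟨hulev, -⟩ := Finset.mem_filter.mp hu1
        obtain ⟨-, hul⟩ := Finset.mem_filter.mp hulev
        obtain ⟨hv1, hv2⟩ := Finset.mem_filter.mp hv
        obtain ⟨hvlev, -⟩ := Finset.mem_filter.mp hv1
        obtain ⟨-, hvl⟩ := Finset.mem_filter.mp hvlev
        have h' : u.1.2 - 2 = v.1.2 - 2 := hfe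
        exact Subtype.ext (Prod.ext (by omega) (by omega))
    simpa using hle
  have h4 := Finset.card_filter_add_card_filter_not
    (s := C) (p := fun v => v.1.2 ≤ 1)
  have h5 := Finset.card_le_card h2
  omega

lemma xE_bound1 (hk : 4 ≤ k) (i : ℕ) (hi : 1 ≤ i) (h : ∀ u ∈ A, u.1 ≠ (i - 1, 0)) :
    xE k t A i + (spA k t A i).card ≤ (levA k t A i).card ∧ 2 * xE k t A i + 1 ≤ k := by
  set C := (levA k t A i).filter (fun v => k / 2 ≤ v.1.2) with hC
  have h1 : xE k t A i ≤ C.card := by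
    apply Finset.card_le_card_of_injOn (fun p => p.2)
    · intro p hp
      obtain ⟨hpE, hp2, hp1⟩ := Finset.mem_filter.mp hp
      obtain ⟨hpA1, hpA2, -, -⟩ := mem_Epairs.mp hpE
      obtain ⟨hc, hcl⟩ := cross_nf hk hpE (by simp only [hp2]; exact hp1)
      rcases hcl with ⟨h0, hch⟩ | ⟨h0, hch⟩
      · exact absurd (Prod.ext (by omega) h0 : p.1.1 = (i - 1, 0)) (h p.1 hpA1)
      · exact Finset.mem_filter.mpr ⟨Finset.mem_filter.mpr ⟨hpA2, hp2⟩, hch⟩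
    · exact xE_snd_injOn hk i
  have h2 : Disjoint (spA k t A i) C := by
    rw [Finset.disjoint_left]
    intro v hv hv'
    obtain ⟨-, -, hj⟩ := Finset.mem_filter.mp hv
    obtain ⟨-, hj'⟩ := Finset.mem_filter.mp hv'
    omega
  have h3 : spA k t A i ∪ C ⊆ levA k t A i :=
    Finset.union_subset (spA_subset i) (Finset.filter_subset _ _)
  have h4 : (spA k t A i).card + C.card ≤ (levA k t A i).card := by
    rw [← Finset.card_union_of_disjoint h2]
    exact Finset.card_le_card h3
  have h5 : C.card ≤ k - 1 - k / 2 := by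
    have hle : C.card ≤ (Finset.range (k - 1 - k / 2)).card := by
      apply Finset.card_le_card_of_injOn (fun v => v.1.2 - k / 2)
      · intro v hv
        obtain ⟨hvlev, hvj⟩ := Finset.mem_filter.mp hv
        obtain ⟨hvA, hlvl⟩ := Finset.mem_filter.mp hvlev
        rcases v.2 with ⟨h0, -⟩ | ⟨-, -, hj2⟩
        · omega
        · exact Finset.mem_range.mpr (by beta_reduce; omega)
      · intro u hu v hv hfe
        obtain ⟨hulev, huj⟩ := Finset.mem_filter.mp hu
        obtain ⟨-, hul⟩ := Finset.mem_filter.mp hulev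
        obtain ⟨hvlev, hvj⟩ := Finset.mem_filter.mp hv
        obtain ⟨-, hvl⟩ := Finset.mem_filter.mp hvlev
        have h' : u.1.2 - k / 2 = v.1.2 - k / 2 := hfe
        exact Subtype.ext (Prod.ext (by omega) (by omega))
    simpa using hle
  exact ⟨by omega, by omega⟩

lemma cardA_decomp : A.card = ∑ i ∈ Finset.range (t + 1), (levA k t A i).card :=
  Finset.card_eq_sum_card_fiberwise fun v _ =>
    Finset.mem_range.mpr (Nat.lt_succ_of_le (valid_fst_le v))



def Fpot (k s m : ℕ) : ℤ :=
  if m = 0 ∨ s = 2 then 0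
  else if s = 1 then (k : ℤ) * ((k : ℤ) - 3)
  else if m = 1 then ((k : ℤ) + 1) * ((k : ℤ) - 2)
  else 2 * ((k : ℤ) + 1) * ((k : ℤ) - 2) - 2 * ((k : ℤ) - 1)

lemma Fpot_m0 (k s : ℕ) : Fpot k s 0 = 0 := by simp [Fpot]
lemma Fpot_s2 (k m : ℕ) : Fpot k 2 m = 0 := by simp [Fpot]
lemma Fpot_s1 (k m : ℕ) (hm : m ≠ 0) : Fpot k 1 m = (k : ℤ) * ((k : ℤ) - 3) := by
  simp [Fpot, hm]
lemma Fpot_s0_1 (k : ℕ) : Fpot k 0 1 = ((k : ℤ) + 1) * ((k : ℤ) - 2) := by simp [Fpot]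
lemma Fpot_s0_big (k m : ℕ) (hm : 2 ≤ m) :
    Fpot k 0 m = 2 * ((k : ℤ) + 1) * ((k : ℤ) - 2) - 2 * ((k : ℤ) - 1) := by
  have h0 : m ≠ 0 := by omega
  have h1 : m ≠ 1 := by omega
  simp [Fpot, h0, h1]

lemma Fpot_nonneg (k s m : ℕ) (hk : 4 ≤ k) : 0 ≤ Fpot k s m := by
  have hk' : (4 : ℤ) ≤ (k : ℤ) := by exact_mod_cast hk
  unfold Fpot
  split_ifs <;> nlinarith

lemma Fpot_le_F0 (k s m : ℕ) (hk : 4 ≤ k) (hs : s ≤ 2) : Fpot k s m ≤ Fpot k 0 m := by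
  have hk' : (4 : ℤ) ≤ (k : ℤ) := by exact_mod_cast hk
  rcases Nat.eq_zero_or_pos m with hm | hm
  · subst hm; simp [Fpot_m0]
  · have hF0 : (k : ℤ) * ((k : ℤ) - 3) ≤ Fpot k 0 m := by
      rcases Nat.lt_or_ge m 2 with hm2 | hm2
      · have hm1 : m = 1 := by omega
        subst hm1; rw [Fpot_s0_1]; nlinarith
      · rw [Fpot_s0_big k m hm2]; nlinarith
    interval_cases s
    · exact le_refl _
    · rw [Fpot_s1 k m (by omega)]; exact hF0
    · rw [Fpot_s2]
      exact le_trans (by nlinarith) hF0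

section Zlemmas
variable {K A W X S : ℤ}

lemma Zsb0 (hK : 4 ≤ K) (hA1 : 1 ≤ A) (hS : 0 ≤ S) (hS2 : S ≤ 2)
    (hAK : A + 3 ≤ S + K) (hA : A ≤ K - 1) (hW : 0 ≤ W) (hX : 0 ≤ X) (hXA : X ≤ A)
    (hw : 2 * W ≤ A * A - A) (hw2 : S = 2 → 2 * W ≤ A * A - A - 2) :
    0 ≤ (K + 1) * (K - 2) * A - 2 * (K - 1) * (W + X) := by
  by_cases h2 : S = 2
  · have hw' := hw2 h2
    have e1 : 0 ≤ (K - 1 - A) * ((K - 1) * A + 2) :=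
      mul_nonneg (by linarith) (by nlinarith)
    have e2 : 0 ≤ (K - 1) * (A * A + A - 2 - 2 * W - 2 * X) :=
      mul_nonneg (by linarith) (by linarith)
    nlinarith [e1, e2]
  · have hS1 : S ≤ 1 := by omega
    have hA2 : A ≤ K - 2 := by linarith
    have f1 : (K - 1) * (A + 1) ≤ (K - 1) * (K - 1) :=
      mul_le_mul_of_nonneg_left (by linarith) (by linarith)
    have e1 : 0 ≤ A * ((K + 1) * (K - 2) - (K - 1) * (A + 1)) :=
      mul_nonneg (by linarith) (by nlinarith [f1])
    have e2 : 0 ≤ (K - 1) * (A * A + A - 2 * W - 2 * X) :=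
      mul_nonneg (by linarith) (by linarith)
    nlinarith [e1, e2]

lemma Zv1 (hK : 4 ≤ K) (hA1 : 1 ≤ A) (hA2 : A ≤ K - 2) (hW : 0 ≤ W)
    (hw : 2 * W ≤ A * A - A) :
    (K + 1) * (K - 2) ≤ (K + 1) * (K - 2) * A - 2 * (K - 1) * (W + 0) := by
  have f1 : (K - 1) * A ≤ (K - 1) * (K - 2) :=
    mul_le_mul_of_nonneg_left (by linarith) (by linarith)
  have e1 : 0 ≤ (A - 1) * ((K + 1) * (K - 2) - (K - 1) * A) :=
    mul_nonneg (by linarith) (by nlinarith [f1])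
  have e2 : 0 ≤ (K - 1) * (A * A - A - 2 * W) := mul_nonneg (by linarith) (by linarith)
  nlinarith [e1, e2]

lemma Zv2 (hK : 4 ≤ K) (hA1 : 2 ≤ A) (hA2 : A ≤ K - 2) (hW : 0 ≤ W)
    (hw : 2 * W ≤ A * A - A) :
    2 * (K + 1) * (K - 2) - 2 * (K - 1) ≤ (K + 1) * (K - 2) * A - 2 * (K - 1) * (W + 0) := by
  have f1 : (K - 1) * (A + 1) ≤ (K - 1) * (K - 1) :=
    mul_le_mul_of_nonneg_left (by linarith) (by linarith)
  have e1 : 0 ≤ (A - 2) * ((K + 1) * (K - 2) - (K - 1) * (A + 1)) :=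
    mul_nonneg (by linarith) (by nlinarith [f1])
  have e2 : 0 ≤ (K - 1) * (A * A - A - 2 * W) := mul_nonneg (by linarith) (by linarith)
  nlinarith [e1, e2]

lemma Zv3 (hK : 4 ≤ K) (hA1 : 2 ≤ A) (hA2 : A ≤ K - 1) (hW : 0 ≤ W)
    (hw : 2 * W ≤ A * A - A - 2) :
    2 * (K + 1) * (K - 2) - 2 * (K - 1) ≤ (K + 1) * (K - 2) * A - 2 * (K - 1) * (W + 0) := by
  have e1 : 0 ≤ (K - 1) * (A - 2) * (K - 1 - A) :=
    mul_nonneg (mul_nonneg (by linarith) (by linarith)) (by linarith)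
  have e2 : 0 ≤ (K - 1) * (A * A - A - 2 - 2 * W) := mul_nonneg (by linarith) (by linarith)
  nlinarith [e1, e2]

lemma Zs1a (hK : 4 ≤ K) (hA1 : 2 ≤ A) (hA2 : A ≤ K - 1) (hW : 0 ≤ W) (hX : 0 ≤ X)
    (hw : 2 * W ≤ A * A - A - 2) (hx : 2 * X ≤ K) :
    K * (K - 3) ≤ (K + 1) * (K - 2) * A - 2 * (K - 1) * (W + X) := by
  have e1 : 0 ≤ (K - 1) * (A - 2) * (K - 1 - A) :=
    mul_nonneg (mul_nonneg (by linarith) (by linarith)) (by linarith)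
  have e2 : 0 ≤ (K - 1) * (A * A - A - 2 - 2 * W) := mul_nonneg (by linarith) (by linarith)
  have e3 : 0 ≤ (K - 1) * (K - 2 * X) := mul_nonneg (by linarith) (by linarith)
  nlinarith [e1, e2, e3]

lemma Zs1b (hK : 4 ≤ K) (hA1 : 1 ≤ A) (hA2 : A ≤ K - 2) (hW : 0 ≤ W) (hX : 0 ≤ X)
    (hw : 2 * W ≤ A * A - A) (hXA : X ≤ A) (hx : 2 * X ≤ K - 1) :
    K * (K - 3) ≤ (K + 1) * (K - 2) * A - 2 * (K - 1) * (W + X) := by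
  rcases eq_or_lt_of_le hA1 with h1 | h1
  · have hA1' : A = 1 := h1.symm
    subst hA1'
    have e1 : (K - 1) * W ≤ 0 :=
      mul_nonpos_of_nonneg_of_nonpos (by linarith) (by linarith)
    have e2 : (K - 1) * X ≤ (K - 1) * 1 :=
      mul_le_mul_of_nonneg_left (by linarith) (by linarith)
    nlinarith [e1, e2]
  · have hA2' : 2 ≤ A := by omega
    have e1 : 0 ≤ (K - 1) * (A - 2) * (K - 2 - A) :=
      mul_nonneg (mul_nonneg (by linarith) (by linarith)) (by linarith)
    have e2 : 0 ≤ (K - 1) * (A * A - A - 2 * W) := mul_nonneg (by linarith) (by linarith)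
    have e3 : 0 ≤ (K - 3) * (A - 1) := mul_nonneg (by linarith) (by linarith)
    have e4 : 0 ≤ (K - 1) * (K - 1 - 2 * X) := mul_nonneg (by linarith) (by linarith)
    nlinarith [e1, e2, e3, e4]

end Zlemmas

lemma key_step (k a s s' w x m' : ℕ) (hk : 4 ≤ k) (ha : a + 1 ≤ k) (hs : s ≤ 2)
    (hs' : s' ≤ 2) (hsa : s ≤ a) (has : a + 3 ≤ s + k)
    (hw : 2 * w + a ≤ a * a) (hw2 : s = 2 → 2 * w + a + 2 ≤ a * a)
    (hx : x ≤ a) (hx0 : s' = 0 → x = 0)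
    (hx1 : s' = 1 → (2 * x + 4 ≤ 2 * s + k ∨ (x + s ≤ a ∧ 2 * x + 1 ≤ k))) :
    Fpot k s' (a + m') ≤
      ((k : ℤ) + 1) * ((k : ℤ) - 2) * a - 2 * ((k : ℤ) - 1) * ((w : ℤ) + (x : ℤ)) +
        Fpot k s m' := by
  have hK : (4 : ℤ) ≤ (k : ℤ) := by exact_mod_cast hk
  rcases Nat.eq_zero_or_pos a with ha0 | ha1
  · -- a = 0 : s = 0, w = 0, x = 0
    have hs0 : s = 0 := by omega
    have hx00 : x = 0 := by omega
    have hw0 : w = 0 := by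
      have : 2 * w ≤ 0 := by
        have := hw; rw [ha0] at this; omega
      omega
    subst ha0 hs0 hx00 hw0
    simpa using Fpot_le_F0 k s' m' hk hs'
  · -- a ≥ 1
    have hA1 : (1 : ℤ) ≤ (a : ℤ) := by exact_mod_cast ha1
    have hA : (a : ℤ) ≤ (k : ℤ) - 1 := by
      have : (a : ℤ) + 1 ≤ (k : ℤ) := by exact_mod_cast ha
      linarith
    have hS : (0 : ℤ) ≤ (s : ℤ) := Int.natCast_nonneg s
    have hS2 : (s : ℤ) ≤ 2 := by exact_mod_cast hs
    have hSA : (s : ℤ) ≤ (a : ℤ) := by exact_mod_cast hsa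
    have hAK : (a : ℤ) + 3 ≤ (s : ℤ) + (k : ℤ) := by exact_mod_cast has
    have hW : (0 : ℤ) ≤ (w : ℤ) := Int.natCast_nonneg w
    have hX : (0 : ℤ) ≤ (x : ℤ) := Int.natCast_nonneg x
    have hXA : (x : ℤ) ≤ (a : ℤ) := by exact_mod_cast hx
    have hw' : 2 * (w : ℤ) ≤ (a : ℤ) * (a : ℤ) - (a : ℤ) := by
      have : (2 * w + a : ℤ) ≤ (a * a : ℕ) := by exact_mod_cast hw
      push_cast at this; linarith
    have hw2' : s = 2 → 2 * (w : ℤ) ≤ (a : ℤ) * (a : ℤ) - (a : ℤ) - 2 := by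
      intro h2
      have := hw2 h2
      have h' : (2 * w + a + 2 : ℤ) ≤ (a * a : ℕ) := by exact_mod_cast this
      push_cast at h'; linarith
    have hsb0 : (0 : ℤ) ≤ ((k : ℤ) + 1) * ((k : ℤ) - 2) * a -
        2 * ((k : ℤ) - 1) * ((w : ℤ) + (x : ℤ)) :=
      Zsb0 hK hA1 hS hS2 hAK hA hW hX hXA hw'
        (fun h2 => hw2' (by exact_mod_cast h2))
    interval_cases s'
    · -- s' = 0, x = 0
      have hx00 : x = 0 := hx0 rfl
      subst hx00
      rcases Nat.eq_zero_or_pos m' with hm0 | hm1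
      · subst hm0
        rw [Fpot_m0]
        rcases Nat.lt_or_ge a 2 with ha2 | ha2
        · -- a = 1
          have ha1' : a = 1 := by omega
          subst ha1'
          rw [show (1 + 0 : ℕ) = 1 from rfl, Fpot_s0_1]
          have hw0 : w = 0 := by omega
          subst hw0
          push_cast
          linarith
        · rw [Nat.add_zero, Fpot_s0_big k a ha2]
          by_cases h2 : s = 2
          · have := Zv3 hK (by exact_mod_cast ha2) hA (by exact_mod_cast hW) (hw2' h2)
            push_cast at this ⊢
            linarith
          · have hA2 : (a : ℤ) ≤ (k : ℤ) - 2 := by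
              have : s ≤ 1 := by omega
              have : (s : ℤ) ≤ 1 := by exact_mod_cast this
              linarith
            have := Zv2 hK (by exact_mod_cast ha2) hA2 hW hw'
            push_cast at this ⊢
            linarith
      · -- m' ≥ 1
        have ham : 2 ≤ a + m' := by omega
        rw [Fpot_s0_big k (a + m') ham]
        by_cases h2 : s = 2
        · subst h2
          rw [Fpot_s2]
          have ha2 : 2 ≤ a := by omega
          have := Zv3 hK (by exact_mod_cast ha2) hA hW (hw2' rfl)
          push_cast at this ⊢
          linarith
        · have hs1 : s ≤ 1 := by omega
          have hA2 : (a : ℤ) ≤ (k : ℤ) - 2 := by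
            have : (s : ℤ) ≤ 1 := by exact_mod_cast hs1
            linarith
          have hv1 := Zv1 hK hA1 hA2 hW hw'
          interval_cases s
          · rcases Nat.lt_or_ge m' 2 with hm2 | hm2
            · have hm1' : m' = 1 := by omega
              subst hm1'
              rw [Fpot_s0_1]
              push_cast at hv1 ⊢
              linarith
            · rw [Fpot_s0_big k m' hm2]
              linarith
          · rw [Fpot_s1 k m' (by omega)]
            push_cast at hv1 ⊢
            linarith
    · -- s' = 1
      have hd := hx1 rfl
      have hLHS : Fpot k 1 (a + m') = (k : ℤ) * ((k : ℤ) - 3) :=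
        Fpot_s1 k (a + m') (by omega)
      rw [hLHS]
      by_cases h2 : s = 2
      · subst h2
        rw [Fpot_s2]
        have ha2 : 2 ≤ a := by omega
        have hxk : 2 * (x : ℤ) ≤ (k : ℤ) := by
          rcases hd with h | ⟨h1', h2'⟩
          · have : (2 * x + 4 : ℤ) ≤ 2 * 2 + k := by exact_mod_cast h
            push_cast at this; linarith
          · have : (2 * x + 1 : ℤ) ≤ (k : ℤ) := by exact_mod_cast h2'
            linarith
        have := Zs1a hK (by exact_mod_cast ha2) hA hW hX (hw2' rfl) hxk
        linarith
      · have hs1 : s ≤ 1 := by omega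
        have hA2 : (a : ℤ) ≤ (k : ℤ) - 2 := by
          have : (s : ℤ) ≤ 1 := by exact_mod_cast hs1
          linarith
        have hxk : 2 * (x : ℤ) ≤ (k : ℤ) - 1 := by
          rcases hd with h | ⟨h1', h2'⟩
          · have h' : (2 * x + 4 : ℤ) ≤ 2 * s + k := by exact_mod_cast h
            have : (s : ℤ) ≤ 1 := by exact_mod_cast hs1
            linarith
          · have : (2 * x + 1 : ℤ) ≤ (k : ℤ) := by exact_mod_cast h2'
            linarith
        have hmain := Zs1b hK hA1 hA2 hW hX hw' hXA hxk
        rcases Nat.eq_zero_or_pos m' with hm0 | hm1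
        · subst hm0
          rw [Fpot_m0]
          linarith
        · have hFge : (k : ℤ) * ((k : ℤ) - 3) ≤ Fpot k s m' := by
            interval_cases s
            · rcases Nat.lt_or_ge m' 2 with hm2 | hm2
              · have hm1' : m' = 1 := by omega
                subst hm1'
                rw [Fpot_s0_1]; nlinarith
              · rw [Fpot_s0_big k m' hm2]; nlinarith
            · rw [Fpot_s1 k m' (by omega)]
          linarith
    · -- s' = 2
      rw [Fpot_s2]
      have := Fpot_nonneg k s m' hk
      linarith

end TowerAux

open TowerAux in
/-- For every `A ⊆ V(T_{k,t})` with `|A| ≥ 2`, `ρ_{k,T}(A) ≥ 2(k+1)(k-2) - 2(k-1)`;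
moreover if `A` contains the base `V₀` then `ρ_{k,T}(A) ≥ 2(k+1)(k-2)`. -/
theorem tower_potential_bound (k t : ℕ) (hk : 4 ≤ k) (ht : 1 ≤ t)
    (A : Finset (TowerVertex k t)) (hA : 2 ≤ A.card) :
    2 * ((k : ℤ) + 1) * ((k : ℤ) - 2) - 2 * ((k : ℤ) - 1) ≤
        potential k (towerGraph k t) A ∧
      ((∀ x : TowerVertex k t, x.1.1 = 0 → x ∈ A) →
        2 * ((k : ℤ) + 1) * ((k : ℤ) - 2) ≤ potential k (towerGraph k t) A) := by
  have hK : (4 : ℤ) ≤ (k : ℤ) := by exact_mod_cast hk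
  have main : ∀ d i : ℕ, i + d = t + 1 → 1 ≤ i →
      Fpot k (spA k t A (i - 1)).card (∑ j ∈ Finset.Ico i (t + 1), (levA k t A j).card) ≤
        ∑ j ∈ Finset.Ico i (t + 1),
          (((k : ℤ) + 1) * ((k : ℤ) - 2) * ((levA k t A j).card : ℤ) -
            2 * ((k : ℤ) - 1) * ((wE k t A j : ℤ) + (xE k t A j : ℤ))) := by
    intro d
    induction d with
    | zero =>
      intro i hi h1
      have he : Finset.Ico i (t + 1) = ∅ := by
        apply Finset.Ico_eq_empty; omega
      rw [he]
      simp [Fpot_m0]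
    | succ d ih =>
      intro i hi h1
      have hlt : i < t + 1 := by omega
      rw [Finset.sum_eq_sum_Ico_succ_bot hlt, Finset.sum_eq_sum_Ico_succ_bot hlt]
      have IH := ih (i + 1) (by omega) (by omega)
      rw [Nat.add_sub_cancel] at IH
      have hstep := key_step k (levA k t A i).card (spA k t A i).card
        (spA k t A (i - 1)).card (wE k t A i) (xE k t A i)
        (∑ j ∈ Finset.Ico (i + 1) (t + 1), (levA k t A j).card)
        hk
        (by have := levA_card_le (A := A) hk i h1; omega)
        (spA_card_le i) (spA_card_le (i - 1))
        (Finset.card_le_card (spA_subset i))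
        (by have := nonsp_bound (A := A) hk i h1; omega)
        (wE_bound hk i)
        (fun h2 => wE_bound2 hk i (by omega))
        (xE_le hk i)
        (fun h0 => xE_eq_zero hk i h1 h0)
        (fun h1' => by
          rcases spA_one (i - 1) h1' with hc | hc
          · exact Or.inl (xE_bound0 hk i h1 hc)
          · exact Or.inr (xE_bound1 hk i h1 hc))
      linarith [hstep, IH]
  have hmain := main t 1 (by omega) le_rfl
  have hcard0 : A.card = (levA k t A 0).card +
      ∑ j ∈ Finset.Ico 1 (t + 1), (levA k t A j).card := by
    rw [cardA_decomp (A := A), Finset.range_eq_Ico,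
      Finset.sum_eq_sum_Ico_succ_bot (by omega : 0 < t + 1)]
  have hfin : ((k : ℤ) + 1) * ((k : ℤ) - 2) * ((levA k t A 0).card : ℤ) +
      Fpot k (spA k t A 0).card (∑ j ∈ Finset.Ico 1 (t + 1), (levA k t A j).card) ≤
      potential k (towerGraph k t) A := by
    have he := edgeCount_le hk A
    have hd := Epairs_card_decomp (A := A) hk
    have hE : (edgeCountOn (towerGraph k t) ↑A : ℤ) ≤
        ∑ j ∈ Finset.Ico 1 (t + 1), ((wE k t A j : ℤ) + (xE k t A j : ℤ)) := by
      have hEn : edgeCountOn (towerGraph k t) ↑A ≤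
          ∑ j ∈ Finset.Ico 1 (t + 1), (wE k t A j + xE k t A j) :=
        le_trans he (le_of_eq hd)
      exact_mod_cast hEn
    have hscaled : 2 * ((k : ℤ) - 1) * (edgeCountOn (towerGraph k t) ↑A : ℤ) ≤
        2 * ((k : ℤ) - 1) *
          ∑ j ∈ Finset.Ico 1 (t + 1), ((wE k t A j : ℤ) + (xE k t A j : ℤ)) :=
      mul_le_mul_of_nonneg_left hE (by linarith)
    have hcard' : (A.card : ℤ) = ((levA k t A 0).card : ℤ) +
        ∑ j ∈ Finset.Ico 1 (t + 1), ((levA k t A j).card : ℤ) := by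
      exact_mod_cast hcard0
    have hmulcard : ((k : ℤ) + 1) * ((k : ℤ) - 2) * (A.card : ℤ) =
        ((k : ℤ) + 1) * ((k : ℤ) - 2) * ((levA k t A 0).card : ℤ) +
        ((k : ℤ) + 1) * ((k : ℤ) - 2) *
          ∑ j ∈ Finset.Ico 1 (t + 1), ((levA k t A j).card : ℤ) := by
      rw [hcard']; ring
    have hsplit : ∑ j ∈ Finset.Ico 1 (t + 1),
        (((k : ℤ) + 1) * ((k : ℤ) - 2) * ((levA k t A j).card : ℤ) -
          2 * ((k : ℤ) - 1) * ((wE k t A j : ℤ) + (xE k t A j : ℤ))) =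
        ((k : ℤ) + 1) * ((k : ℤ) - 2) *
          (∑ j ∈ Finset.Ico 1 (t + 1), ((levA k t A j).card : ℤ)) -
        2 * ((k : ℤ) - 1) *
          (∑ j ∈ Finset.Ico 1 (t + 1), ((wE k t A j : ℤ) + (xE k t A j : ℤ))) := by
      rw [Finset.sum_sub_distrib, Finset.mul_sum, Finset.mul_sum]
    rw [potential]
    rw [Nat.sub_self] at hmain
    linarith [hmain, hscaled, hmulcard, hsplit]
  rw [spA0_eq] at hfin
  have ha02 : (levA k t A 0).card ≤ 2 := levA0_card_le
  have h012 : (levA k t A 0).card = 0 ∨ (levA k t A 0).card = 1 ∨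
      (levA k t A 0).card = 2 := by omega
  have hcase2 : (levA k t A 0).card = 2 →
      2 * ((k : ℤ) + 1) * ((k : ℤ) - 2) ≤ potential k (towerGraph k t) A := by
    intro h2
    rw [h2] at hfin
    have hnn := Fpot_nonneg k 2 (∑ j ∈ Finset.Ico 1 (t + 1), (levA k t A j).card) hk
    push_cast at hfin
    linarith
  constructor
  · rcases h012 with h0 | h1 | h2
    · rw [h0] at hfin
      rw [Fpot_s0_big k _ (by omega)] at hfin
      push_cast at hfin
      linarith
    · rw [h1] at hfin
      rw [Fpot_s1 k _ (by omega)] at hfin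
      push_cast at hfin
      nlinarith [hfin]
    · have := hcase2 h2
      linarith
  · intro hbase
    have hv0 : (⟨(0, 0), Or.inl ⟨rfl, by omega⟩⟩ : TowerVertex k t) ∈ A :=
      hbase _ rfl
    have hv1 : (⟨(0, 1), Or.inl ⟨rfl, by omega⟩⟩ : TowerVertex k t) ∈ A :=
      hbase _ rfl
    have hm0 : (⟨(0, 0), Or.inl ⟨rfl, by omega⟩⟩ : TowerVertex k t) ∈ levA k t A 0 :=
      Finset.mem_filter.mpr ⟨hv0, rfl⟩
    have hm1 : (⟨(0, 1), Or.inl ⟨rfl, by omega⟩⟩ : TowerVertex k t) ∈ levA k t A 0 :=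
      Finset.mem_filter.mpr ⟨hv1, rfl⟩
    have hne : (⟨(0, 0), Or.inl ⟨rfl, by omega⟩⟩ : TowerVertex k t) ≠
        ⟨(0, 1), Or.inl ⟨rfl, by omega⟩⟩ := by
      intro h
      have := congrArg (fun v : TowerVertex k t => v.1.2) h
      simp at this
    have h2le : 2 ≤ (levA k t A 0).card :=
      Finset.one_lt_card.mpr ⟨_, hm0, _, hm1, hne⟩
    exact hcase2 (by omega)
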